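/- Let A be a right regular ring (in the sense of Vogel). Then the polynomial ring A[t] is right regular too. -/

import Mathlib

universe u

open CategoryTheory CategoryTheory.Limits

/-- A class of `R`-modules is stable under filtered colimits if, for every
filtered diagram of modules all of whose objects belong to the class, the
colimit (i.e. the point of any colimit cocone) again belongs to the class. -/
def StableUnderFilteredColimits (R : Type u) [Ring R] (S : Set (ModuleCat.{u} R)) : Prop :=
  ∀ (J : Type u) (_ : SmallCategory J) (_ : IsFiltered J)
    (F : J ⥤ ModuleCat.{u} R) (c : Cocone F), IsColimit c →
    (∀ j : J, F.obj j ∈ S) → c.pt ∈ S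

/-- The 2/3 axiom: for every short exact sequence `0 → M → N → P → 0`, if two of the
three modules belong to the class, then so does the third. -/
def SatisfiesTwoOfThree (R : Type u) [Ring R] (S : Set (ModuleCat.{u} R)) : Prop :=
  ∀ (M N P : ModuleCat.{u} R) (f : M →ₗ[R] N) (g : N →ₗ[R] P),
    Function.Injective f → Function.Surjective g → Function.Exact f g →
      ((M ∈ S → N ∈ S → P ∈ S) ∧ (M ∈ S → P ∈ S → N ∈ S) ∧ (N ∈ S → P ∈ S → M ∈ S))

/-- A class of `R`-modules is exact if it is stable under filtered colimits and
satisfies the 2/3 axiom. -/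
def IsExactClass (R : Type u) [Ring R] (S : Set (ModuleCat.{u} R)) : Prop :=
  StableUnderFilteredColimits R S ∧ SatisfiesTwoOfThree R S

/-- An `R`-module is regular (in the sense of Vogel) if it belongs to every exact class
containing the module `R` itself (i.e. to the smallest such class). -/
def IsRegularModule (R : Type u) [Ring R] (M : ModuleCat.{u} R) : Prop :=
  ∀ S : Set (ModuleCat.{u} R), IsExactClass R S → ModuleCat.of R R ∈ S → M ∈ S

/-- A ring `R` is regular in the sense of Vogel if every `R`-module is regular,
i.e. every exact class of `R`-modules containing `R` contains all `R`-modules. -/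
def IsVogelRegular (R : Type u) [Ring R] : Prop :=
  ∀ M : ModuleCat.{u} R, IsRegularModule R M

/-- A ring is right regular (in the sense of Vogel) if the opposite ring is regular for
left modules, i.e. the category of right `R`-modules (= left `Rᵐᵒᵖ`-modules) has the
Vogel regularity property. -/
def IsVogelRightRegular (R : Type u) [Ring R] : Prop := IsVogelRegular Rᵐᵒᵖ

/-- A module is flat iff it is a filtered colimit of finitely generated free modules
(Lazard's theorem); we take this characterization as the definition of flatness,
which makes sense over an arbitrary (possibly non-commutative) ring. -/
def IsLazardFlat (R : Type u) [Ring R] (M : Type u) [AddCommGroup M] [Module R M] : Prop :=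
  ∃ (J : Type u) (_ : SmallCategory J) (_ : IsFiltered J)
    (F : J ⥤ ModuleCat.{u} R) (c : Cocone F) (_ : IsColimit c),
    (∀ j : J, ∃ n : ℕ, Nonempty ((F.obj j) ≃ₗ[R] (Fin n → R))) ∧
    Nonempty (c.pt ≃ₗ[R] M)

open Polynomial

set_option linter.unusedSectionVars false

noncomputable section

def PolyMod (R : Type u) (M : Type u) [Ring R] [AddCommGroup M] [Module R M] : Type u := ℕ →₀ M

section PolyMod
variable (R M : Type u) [Ring R] [AddCommGroup M] [Module R M]

def polyShift : (ℕ →₀ M) →ₗ[R] (ℕ →₀ M) := Finsupp.lmapDomain M R (· + 1)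

def polyPsi : R[X] →+* AddMonoid.End (ℕ →₀ M) :=
  Polynomial.eval₂RingHom' (Module.toAddMonoidEnd R (ℕ →₀ M))
    ((polyShift R M).toAddMonoidHom : AddMonoid.End (ℕ →₀ M))
    (fun a => AddMonoidHom.ext fun v => by
      show a • (polyShift R M v) = polyShift R M (a • v)
      rw [map_smul])

instance : AddCommGroup (PolyMod R M) := inferInstanceAs (AddCommGroup (ℕ →₀ M))
instance : Module R (PolyMod R M) := inferInstanceAs (Module R (ℕ →₀ M))
instance : Module R[X] (PolyMod R M) := Module.compHom (ℕ →₀ M) (polyPsi R M)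

variable {R M}

def PolyMod.single (n : ℕ) (m : M) : PolyMod R M := Finsupp.single n m

lemma PolyMod.smul_def (p : R[X]) (v : PolyMod R M) : p • v = polyPsi R M p v := rfl

lemma PolyMod.C_smul (a : R) (v : PolyMod R M) :
    (Polynomial.C a : R[X]) • v = (a • (v : ℕ →₀ M) : ℕ →₀ M) := by
  show polyPsi R M (Polynomial.C a) v = _
  simp [polyPsi, Polynomial.eval₂RingHom']
  erw [Polynomial.eval₂_C]
  rfl

lemma PolyMod.X_smul (v : PolyMod R M) :
    (Polynomial.X : R[X]) • v = Finsupp.mapDomain (· + 1) (v : ℕ →₀ M) := by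
  show polyPsi R M Polynomial.X v = _
  simp [polyPsi, Polynomial.eval₂RingHom']
  erw [Polynomial.eval₂_X]
  rfl

lemma PolyMod.X_smul_single (n : ℕ) (m : M) :
    (Polynomial.X : R[X]) • (PolyMod.single n m : PolyMod R M) = PolyMod.single (n + 1) m := by
  rw [PolyMod.X_smul]
  exact Finsupp.mapDomain_single

lemma PolyMod.X_pow_smul_single (i n : ℕ) (m : M) :
    (Polynomial.X ^ i : R[X]) • (PolyMod.single n m : PolyMod R M) = PolyMod.single (n + i) m := by
  induction i with
  | zero => simp
  | succ k ih =>
    rw [pow_succ', mul_smul, ih, PolyMod.X_smul_single, Nat.add_assoc]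

lemma PolyMod.C_smul_single (a : R) (n : ℕ) (m : M) :
    (Polynomial.C a : R[X]) • (PolyMod.single n m : PolyMod R M) = PolyMod.single n (a • m) := by
  rw [PolyMod.C_smul]
  exact Finsupp.smul_single a n m

lemma PolyMod.monomial_smul_single (i : ℕ) (a : R) (j : ℕ) (m : M) :
    (Polynomial.monomial i a : R[X]) • (PolyMod.single j m : PolyMod R M)
      = PolyMod.single (i + j) (a • m) := by
  rw [← Polynomial.C_mul_X_pow_eq_monomial, mul_smul, PolyMod.X_pow_smul_single,
    PolyMod.C_smul_single, Nat.add_comm]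

theorem PolyMod.induction_linear {R M : Type u} [Ring R] [AddCommGroup M] [Module R M]
    {p : PolyMod R M → Prop} (v : PolyMod R M) (zero : p 0)
    (add : ∀ v w : PolyMod R M, p v → p w → p (v + w))
    (single : ∀ (j : ℕ) (m : M), p (Finsupp.single j m : ℕ →₀ M)) : p v :=
  Finsupp.induction_linear v zero add single

section
variable {N : Type u} [AddCommGroup N] [Module R[X] N]

lemma PolyMod.addHom_smul (g : PolyMod R M →+ N)
    (h : ∀ i a j m, g ((Polynomial.monomial i a : R[X]) • (PolyMod.single j m : PolyMod R M))
      = (Polynomial.monomial i a : R[X]) • g (PolyMod.single j m)) (p : R[X]) (v : PolyMod R M) :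
    g (p • v) = p • g v := by
  induction v using PolyMod.induction_linear with
  | zero => simp
  | add v w hv hw => rw [smul_add, map_add, hv, hw, map_add, smul_add]
  | single j m =>
    change g (p • (PolyMod.single j m : PolyMod R M)) = p • g (PolyMod.single j m)
    induction p using Polynomial.induction_on' with
    | add p q hp hq => rw [add_smul, map_add, hp, hq, add_smul]
    | monomial i a => exact h i a j m

variable {M' : Type u} [AddCommGroup M'] [Module R M']

def PolyMod.mapAdd (f : M →ₗ[R] M') : PolyMod R M →+ PolyMod R M' where
  toFun v := (Finsupp.mapRange f f.map_zero (v : ℕ →₀ M) : PolyMod R M')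
  map_zero' := by
    show Finsupp.mapRange f f.map_zero 0 = 0
    exact Finsupp.mapRange_zero
  map_add' v w := Finsupp.mapRange_add (hf := f.map_zero) f.map_add v w

lemma PolyMod.mapAdd_single (f : M →ₗ[R] M') (n : ℕ) (m : M) :
    PolyMod.mapAdd f (PolyMod.single n m : PolyMod R M) = PolyMod.single n (f m) := by
  show Finsupp.mapRange f f.map_zero (Finsupp.single n m) = Finsupp.single n (f m)
  exact Finsupp.mapRange_single

/-- Functoriality of `PolyMod`. -/
def PolyMod.map (f : M →ₗ[R] M') : PolyMod R M →ₗ[R[X]] PolyMod R M' where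
  toFun := PolyMod.mapAdd f
  map_add' := (PolyMod.mapAdd f).map_add
  map_smul' p v := by
    refine PolyMod.addHom_smul (PolyMod.mapAdd f) (fun i a j m => ?_) p v
    rw [PolyMod.monomial_smul_single, PolyMod.mapAdd_single, PolyMod.mapAdd_single,
      PolyMod.monomial_smul_single, map_smul]

lemma PolyMod.map_single (f : M →ₗ[R] M') (n : ℕ) (m : M) :
    PolyMod.map f (PolyMod.single n m : PolyMod R M) = PolyMod.single n (f m) :=
  PolyMod.mapAdd_single f n m

def PolyMod.liftAdd (h : M →+ N) : PolyMod R M →+ N :=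
  AddMonoidHom.mk' (fun v => (v : ℕ →₀ M).sum fun i m => (Polynomial.X ^ i : R[X]) • h m)
    (fun v w => Finsupp.sum_add_index (fun i _ => by simp) (fun i _ m m' => by
      rw [map_add, smul_add]))

lemma PolyMod.liftAdd_single (h : M →+ N) (n : ℕ) (m : M) :
    PolyMod.liftAdd h (PolyMod.single n m : PolyMod R M) = (Polynomial.X ^ n : R[X]) • h m := by
  show (Finsupp.sum (Finsupp.single n m) fun i m => (Polynomial.X ^ i : R[X]) • h m) = _
  rw [Finsupp.sum_single_index]; simp

/-- The universal lift out of `PolyMod R M`. -/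
def PolyMod.lift (h : M →+ N) (hh : ∀ (a : R) (m : M), h (a • m) = (Polynomial.C a : R[X]) • h m) :
    PolyMod R M →ₗ[R[X]] N where
  toFun := PolyMod.liftAdd h
  map_add' := (PolyMod.liftAdd h).map_add
  map_smul' p v := by
    refine PolyMod.addHom_smul (PolyMod.liftAdd h) (fun i a j m => ?_) p v
    rw [PolyMod.monomial_smul_single, PolyMod.liftAdd_single, PolyMod.liftAdd_single, hh,
      ← mul_smul, ← mul_smul]
    congr 1
    rw [Polynomial.X_pow_mul, ← Polynomial.C_mul_X_pow_eq_monomial, mul_assoc, ← pow_add]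

lemma PolyMod.lift_single (h : M →+ N)
    (hh : ∀ (a : R) (m : M), h (a • m) = (Polynomial.C a : R[X]) • h m) (n : ℕ) (m : M) :
    PolyMod.lift h hh (PolyMod.single n m : PolyMod R M) = (Polynomial.X ^ n : R[X]) • h m :=
  PolyMod.liftAdd_single h n m

end

end PolyMod
section ToF
variable {R : Type u} [Ring R] {M : Type u} [AddCommGroup M] [Module R M]

/-- The underlying finitely supported function of an element of `PolyMod R M`. -/
def PolyMod.toF (v : PolyMod R M) : ℕ →₀ M := v

lemma PolyMod.single_add' (n : ℕ) (m m' : M) :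
    (PolyMod.single n (m + m') : PolyMod R M) = PolyMod.single n m + PolyMod.single n m' :=
  Finsupp.single_add n m m'

lemma PolyMod.toF_add (v w : PolyMod R M) : (v + w).toF = v.toF + w.toF := rfl
lemma PolyMod.toF_sub (v w : PolyMod R M) : (v - w).toF = v.toF - w.toF := rfl
lemma PolyMod.toF_zero : (0 : PolyMod R M).toF = 0 := rfl
lemma PolyMod.toF_single (n : ℕ) (m : M) :
    (PolyMod.single n m : PolyMod R M).toF = Finsupp.single n m := rfl
lemma PolyMod.toF_ext {v w : PolyMod R M} (h : ∀ n, v.toF n = w.toF n) : v = w :=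
  Finsupp.ext h
lemma PolyMod.toF_add_apply (v w : PolyMod R M) (n : ℕ) : (v + w).toF n = v.toF n + w.toF n :=
  Finsupp.add_apply _ _ _
lemma PolyMod.toF_sub_apply (v w : PolyMod R M) (n : ℕ) : (v - w).toF n = v.toF n - w.toF n :=
  Finsupp.sub_apply _ _ _
lemma PolyMod.toF_eq_zero {v : PolyMod R M} (h : ∀ n, v.toF n = 0) : v = 0 :=
  PolyMod.toF_ext (fun n => by rw [h n]; rfl)

end ToF

section CharSeq
variable {R : Type u} [Ring R] {M : Type u} [AddCommGroup M] [Module R M] [Module R[X] M]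
variable (hcomp : ∀ (a : R) (x : M), a • x = (Polynomial.C a : R[X]) • x)

/-- The evaluation map `M[X] → M`. -/
def charBeta : PolyMod R M →ₗ[R[X]] M :=
  PolyMod.lift (AddMonoidHom.id M) (fun a m => hcomp a m)

lemma charBeta_single (n : ℕ) (m : M) :
    charBeta hcomp (PolyMod.single n m : PolyMod R M) = (Polynomial.X ^ n : R[X]) • m :=
  PolyMod.lift_single _ _ n m

lemma charBeta_surjective : Function.Surjective (charBeta hcomp (M := M)) := fun m =>
  ⟨PolyMod.single 0 m, by rw [charBeta_single, pow_zero, one_smul]⟩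

def charAlphaHom : M →+ PolyMod R M :=
  AddMonoidHom.mk' (fun m => (PolyMod.single 1 m - PolyMod.single 0 ((Polynomial.X : R[X]) • m)))
    (fun m m' => by
      show (Finsupp.single 1 (m + m') : ℕ →₀ M)
          - Finsupp.single 0 ((Polynomial.X : R[X]) • (m + m'))
        = ((Finsupp.single 1 m : ℕ →₀ M) - Finsupp.single 0 ((Polynomial.X : R[X]) • m))
          + ((Finsupp.single 1 m' : ℕ →₀ M) - Finsupp.single 0 ((Polynomial.X : R[X]) • m'))
      rw [Finsupp.single_add, smul_add, Finsupp.single_add]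
      abel)

lemma charAlphaHom_apply (m : M) :
    charAlphaHom m = (PolyMod.single 1 m : PolyMod R M)
      - PolyMod.single 0 ((Polynomial.X : R[X]) • m) := rfl

/-- The map `M[X] → M[X]`: multiplication by `X` minus the internal `X`-action. -/
def charAlpha : PolyMod R M →ₗ[R[X]] PolyMod R M :=
  PolyMod.lift charAlphaHom (fun a m => by
    rw [charAlphaHom_apply, charAlphaHom_apply, smul_sub, PolyMod.C_smul_single,
      PolyMod.C_smul_single]
    have hXa : (Polynomial.X : R[X]) • (a • m) = a • ((Polynomial.X : R[X]) • m) := by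
      rw [hcomp a m, hcomp a ((Polynomial.X : R[X]) • m), ← mul_smul, ← mul_smul,
        Polynomial.X_mul]
    rw [hXa])

lemma charAlpha_single (j : ℕ) (m : M) :
    charAlpha hcomp (PolyMod.single j m : PolyMod R M)
      = PolyMod.single (j + 1) m - PolyMod.single j ((Polynomial.X : R[X]) • m) := by
  rw [charAlpha, PolyMod.lift_single, charAlphaHom_apply, smul_sub, PolyMod.X_pow_smul_single,
    PolyMod.X_pow_smul_single, Nat.add_comm 1 j, Nat.zero_add]

lemma charBeta_charAlpha (v : PolyMod R M) : charBeta hcomp (charAlpha hcomp v) = 0 := by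
  induction v using PolyMod.induction_linear with
  | zero => simp
  | add v w hv hw => rw [map_add, map_add, hv, hw, add_zero]
  | single j m =>
    rw [show (Finsupp.single j m : ℕ →₀ M) = (PolyMod.single j m : PolyMod R M) from rfl,
      charAlpha_single, map_sub, charBeta_single, charBeta_single, pow_succ, mul_smul, sub_self]

lemma charAlpha_coeff (v : PolyMod R M) :
    ∀ n, (charAlpha hcomp v).toF (n + 1) =
      v.toF n - (Polynomial.X : R[X]) • (v.toF (n + 1)) := by
  induction v using PolyMod.induction_linear with
  | zero => intro n; rw [map_zero]; simp [PolyMod.toF_zero]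
  | add v w hv hw =>
    intro n
    rw [LinearMap.map_add, PolyMod.toF_add_apply, hv n, hw n, PolyMod.toF_add_apply,
      PolyMod.toF_add_apply, smul_add]
    abel
  | single j m =>
    intro n
    rw [show (Finsupp.single j m : ℕ →₀ M) = (PolyMod.single j m : PolyMod R M) from rfl,
      charAlpha_single, PolyMod.toF_sub_apply, PolyMod.toF_single, PolyMod.toF_single,
      PolyMod.toF_single]
    simp only [Finsupp.single_apply]
    split_ifs <;> first | (exfalso; omega) | simp

lemma charAlpha_injective : Function.Injective (charAlpha hcomp (M := M)) := by
  rw [injective_iff_map_eq_zero]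
  intro v hv
  have key : ∀ n, v.toF n = (Polynomial.X : R[X]) • (v.toF (n + 1)) := by
    intro n
    have h1 := charAlpha_coeff hcomp v n
    rw [hv, PolyMod.toF_zero, Finsupp.zero_apply] at h1
    exact (sub_eq_zero.mp h1.symm)
  have key2 : ∀ (k n : ℕ), v.toF n = (Polynomial.X ^ k : R[X]) • (v.toF (n + k)) := by
    intro k
    induction k with
    | zero => intro n; simp
    | succ k ih =>
      intro n
      rw [key n, ih (n+1), ← mul_smul, ← pow_succ', Nat.add_assoc, Nat.add_comm 1 k]
  refine PolyMod.toF_eq_zero (fun n => ?_)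
  rw [key2 (v.toF.support.sup id + 1) n]
  have hz : v.toF (n + (v.toF.support.sup id + 1)) = 0 := by
    by_contra h
    have hmem : n + (v.toF.support.sup id + 1) ∈ v.toF.support := Finsupp.mem_support_iff.mpr h
    have := Finset.le_sup (f := id) hmem
    simp only [id] at this
    omega
  rw [hz, smul_zero]

lemma charAlpha_exact_aux : ∀ (n : ℕ) (v : PolyMod R M),
    (∀ j, n ≤ j → v.toF j = 0) → charBeta hcomp v = 0 →
    ∃ w, charAlpha hcomp w = v := by
  intro n
  induction n with
  | zero =>
    intro v hv _
    exact ⟨0, by rw [map_zero, (PolyMod.toF_eq_zero (fun j => hv j (Nat.zero_le j)) : v = 0)]⟩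
  | succ n ih =>
    intro v hv hβ
    match n, ih with
    | 0, _ =>
      have hv0 : v = (PolyMod.single 0 (v.toF 0) : PolyMod R M) := by
        refine PolyMod.toF_ext (fun j => ?_)
        rw [PolyMod.toF_single]
        match j with
        | 0 => simp
        | Nat.succ k =>
          rw [hv (k+1) (by omega)]
          simp
      rw [hv0, charBeta_single, pow_zero, one_smul] at hβ
      refine ⟨0, ?_⟩
      rw [map_zero, hv0, hβ]
      refine (PolyMod.toF_ext (fun j => ?_)).symm
      rw [PolyMod.toF_single, PolyMod.toF_zero, Finsupp.single_zero]
    | Nat.succ k, ih =>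
      obtain ⟨w', hw'⟩ : ∃ w', charAlpha hcomp w'
          = v - charAlpha hcomp (PolyMod.single k (v.toF (k+1))) := by
        refine ih _ (fun j hj => ?_) ?_
        · rw [PolyMod.toF_sub_apply, charAlpha_single, PolyMod.toF_sub_apply,
            PolyMod.toF_single, PolyMod.toF_single]
          simp only [Finsupp.single_apply]
          rcases Nat.lt_or_ge j (k + 2) with h | h
          · have hjk : j = k + 1 := by omega
            subst hjk
            rw [if_pos rfl, if_neg (by omega)]
            simp
          · rw [hv j (by omega), if_neg (by omega), if_neg (by omega)]
            simp
        · rw [map_sub, hβ, charBeta_charAlpha, sub_zero]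
      refine ⟨w' + PolyMod.single k (v.toF (k+1)), ?_⟩
      rw [map_add, hw']
      abel

lemma charAlpha_exact : Function.Exact (charAlpha hcomp (M := M)) (charBeta hcomp) := by
  intro v
  constructor
  · intro hβ
    refine charAlpha_exact_aux hcomp (v.toF.support.sup id + 1) v (fun j hj => ?_) hβ
    by_contra h
    have hmem : j ∈ v.toF.support := Finsupp.mem_support_iff.mpr h
    have := Finset.le_sup (f := id) hmem
    simp only [id] at this
    omega
  · rintro ⟨w, rfl⟩
    exact charBeta_charAlpha hcomp w

end CharSeq
section ExactUtils
variable {R : Type u} [Ring R]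

lemma punit_mem_of_exact {S : Set (ModuleCat.{u} R)} (hS : IsExactClass R S)
    (h0 : ModuleCat.of R R ∈ S) : ModuleCat.of R PUnit ∈ S :=
  (hS.2 (ModuleCat.of R R) (ModuleCat.of R R) (ModuleCat.of R PUnit)
    LinearMap.id 0 (fun _ _ h => h) (fun _ => ⟨0, Subsingleton.elim _ _⟩)
    (fun y => ⟨fun _ => ⟨y, rfl⟩, fun _ => Subsingleton.elim _ _⟩)).1 h0 h0

lemma mem_of_linearEquiv {S : Set (ModuleCat.{u} R)} (hS : IsExactClass R S)
    (h0 : ModuleCat.of R R ∈ S) (M N : ModuleCat.{u} R) (e : M ≃ₗ[R] N) (hM : M ∈ S) : N ∈ S :=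
  (hS.2 M N (ModuleCat.of R PUnit) e.toLinearMap 0 e.injective
    (fun _ => ⟨0, Subsingleton.elim _ _⟩)
    (fun y => ⟨fun _ => ⟨e.symm y, e.apply_symm_apply y⟩, fun _ => Subsingleton.elim _ _⟩)).2.1
    hM (punit_mem_of_exact hS h0)

lemma mem_of_iso {S : Set (ModuleCat.{u} R)} (hS : IsExactClass R S)
    (h0 : ModuleCat.of R R ∈ S) (M N : ModuleCat.{u} R) (i : M ≅ N) (hM : M ∈ S) : N ∈ S := by
  have hinj : Function.Injective i.hom.hom := fun a b h => by
    have ha : (i.hom ≫ i.inv).hom a = (i.hom ≫ i.inv).hom b := by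
      show i.inv.hom (i.hom.hom a) = i.inv.hom (i.hom.hom b)
      rw [h]
    rw [i.hom_inv_id] at ha
    exact ha
  have hsurj : ∀ y : N, ∃ x : M, i.hom.hom x = y := fun y => ⟨i.inv.hom y, by
    have := i.inv_hom_id
    exact congrArg (fun f => f.hom y) this⟩
  exact (hS.2 M N (ModuleCat.of R PUnit) i.hom.hom 0 hinj
    (fun _ => ⟨0, Subsingleton.elim _ _⟩)
    (fun y => ⟨fun _ => hsurj y, fun _ => Subsingleton.elim _ _⟩)).2.1
    hM (punit_mem_of_exact hS h0)

end ExactUtils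

section MapTransfer
variable {R : Type u} [Ring R] {M N P : Type u} [AddCommGroup M] [Module R M]
  [AddCommGroup N] [Module R N] [AddCommGroup P] [Module R P]

lemma PolyMod.toF_map_apply (f : M →ₗ[R] N) (v : PolyMod R M) (n : ℕ) :
    (PolyMod.map f v).toF n = f (v.toF n) := by
  show Finsupp.mapRange f f.map_zero v.toF n = f (v.toF n)
  exact Finsupp.mapRange_apply

lemma PolyMod.map_injective {f : M →ₗ[R] N} (hf : Function.Injective f) :
    Function.Injective (PolyMod.map f (R := R)) := by
  intro v w h
  refine PolyMod.toF_ext (fun n => hf ?_)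
  rw [← PolyMod.toF_map_apply, ← PolyMod.toF_map_apply, h]

lemma PolyMod.map_surjective {g : M →ₗ[R] N} (hg : Function.Surjective g) :
    Function.Surjective (PolyMod.map g (R := R)) := by
  intro v
  have hex : ∀ n, ∃ m : M, g m = v.toF n := fun n => hg (v.toF n)
  classical
  refine ⟨Finsupp.onFinset v.toF.support
    (fun n => if h : v.toF n = 0 then 0 else Classical.choose (hex n)) (fun n hn => ?_), ?_⟩
  · rw [Finsupp.mem_support_iff]
    intro h0
    exact hn (dif_pos h0)
  · refine PolyMod.toF_ext (fun n => ?_)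
    refine (PolyMod.toF_map_apply g _ n).trans ?_
    show g (if h : v.toF n = 0 then 0 else Classical.choose (hex n)) = v.toF n
    split_ifs with h
    · rw [map_zero, h]
    · exact Classical.choose_spec (hex n)

lemma PolyMod.map_exact {f : M →ₗ[R] N} {g : N →ₗ[R] P} (hf : Function.Injective f)
    (hfg : Function.Exact f g) :
    Function.Exact (PolyMod.map f (R := R)) (PolyMod.map g) := by
  intro v
  constructor
  · intro hv
    have hex : ∀ n, ∃ m : M, f m = v.toF n := fun n => by
      have h1 : g (v.toF n) = 0 := by
        rw [← PolyMod.toF_map_apply g v n, hv]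
        rfl
      exact (hfg (v.toF n)).mp h1
    classical
    refine ⟨Finsupp.onFinset v.toF.support (fun n => Classical.choose (hex n)) (fun n hn => ?_),
      ?_⟩
    · rw [Finsupp.mem_support_iff]
      intro h0
      exact hn (hf (by rw [Classical.choose_spec (hex n), h0, map_zero]))
    · refine PolyMod.toF_ext (fun n => ?_)
      refine (PolyMod.toF_map_apply f _ n).trans ?_
      exact Classical.choose_spec (hex n)
  · rintro ⟨w, rfl⟩
    refine PolyMod.toF_eq_zero (fun n => ?_)
    rw [PolyMod.toF_map_apply, PolyMod.toF_map_apply]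
    exact hfg.apply_apply_eq_zero (w.toF n)

end MapTransfer

section SelfIso
variable (R : Type u) [Ring R]

def polyModSelfHom : PolyMod R R →ₗ[R[X]] R[X] :=
  PolyMod.lift (Polynomial.C.toAddMonoidHom : R →+ R[X]) (fun a m => by
    show Polynomial.C (a • m) = Polynomial.C a • Polynomial.C m
    rw [smul_eq_mul, map_mul, smul_eq_mul])

lemma polyModSelfHom_single (n : ℕ) (a : R) :
    polyModSelfHom R (PolyMod.single n a : PolyMod R R) = Polynomial.monomial n a := by
  rw [polyModSelfHom, PolyMod.lift_single]
  show (Polynomial.X ^ n : R[X]) • Polynomial.C a = _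
  rw [smul_eq_mul, Polynomial.X_pow_mul, Polynomial.C_mul_X_pow_eq_monomial]

lemma polyModSelfHom_coeff (v : PolyMod R R) (n : ℕ) :
    (polyModSelfHom R v).coeff n = v.toF n := by
  induction v using PolyMod.induction_linear with
  | zero => rw [map_zero]; rfl
  | add v w hv hw =>
    rw [LinearMap.map_add, Polynomial.coeff_add, hv, hw, PolyMod.toF_add_apply]
  | single j m =>
    rw [show (Finsupp.single j m : ℕ →₀ R) = (PolyMod.single j m : PolyMod R R) from rfl,
      polyModSelfHom_single, Polynomial.coeff_monomial, PolyMod.toF_single]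
    rw [Finsupp.single_apply]

def polyModSelf : PolyMod R R ≃ₗ[R[X]] R[X] := by
  refine LinearEquiv.ofBijective (polyModSelfHom R) ⟨?_, ?_⟩
  · intro v w h
    refine PolyMod.toF_ext (fun n => ?_)
    rw [← polyModSelfHom_coeff, ← polyModSelfHom_coeff, h]
  · intro p
    induction p using Polynomial.induction_on' with
    | add p q hp hq =>
      obtain ⟨v, rfl⟩ := hp
      obtain ⟨w, rfl⟩ := hq
      exact ⟨v + w, map_add _ _ _⟩
    | monomial n a => exact ⟨PolyMod.single n a, polyModSelfHom_single R n a⟩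

end SelfIso
section Functoriality
variable {R : Type u} [Ring R]

lemma PolyMod.lhom_ext {M : Type u} [AddCommGroup M] [Module R M] {N : Type u} [AddCommGroup N]
    [Module R[X] N] {g g' : PolyMod R M →ₗ[R[X]] N}
    (h : ∀ j m, g (PolyMod.single j m : PolyMod R M) = g' (PolyMod.single j m)) : g = g' := by
  refine LinearMap.ext (fun v => ?_)
  induction v using PolyMod.induction_linear with
  | zero => rw [map_zero, map_zero]
  | add v w hv hw => rw [LinearMap.map_add, LinearMap.map_add, hv, hw]
  | single j m => exact h j m

variable (R) in
/-- The induction functor `Mod_R → Mod_{R[X]}`, `M ↦ M[X]`. -/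
def polyFunctor : ModuleCat.{u} R ⥤ ModuleCat.{u} R[X] where
  obj M := ModuleCat.of R[X] (PolyMod R M)
  map {M N} f := ModuleCat.ofHom (PolyMod.map f.hom)
  map_id M := ModuleCat.hom_ext (PolyMod.lhom_ext (fun j m => by
    show PolyMod.map LinearMap.id (PolyMod.single j m : PolyMod R M) = PolyMod.single j m
    rw [PolyMod.map_single]
    rfl))
  map_comp {M N P} f g := ModuleCat.hom_ext (PolyMod.lhom_ext (fun j m => by
    show PolyMod.map (g.hom.comp f.hom) (PolyMod.single j m)
      = PolyMod.map g.hom (PolyMod.map f.hom _)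
    rw [PolyMod.map_single, PolyMod.map_single, PolyMod.map_single]
    rfl))

def adjToFun {M : ModuleCat.{u} R} {N : ModuleCat.{u} R[X]}
    (g : (polyFunctor R).obj M ⟶ N) :
    M ⟶ (ModuleCat.restrictScalars (Polynomial.C : R →+* R[X])).obj N :=
    ModuleCat.ofHom (Y := ((ModuleCat.restrictScalars (Polynomial.C : R →+* R[X])).obj N)) ({
  toFun := fun m => g.hom (PolyMod.single 0 m)
  map_add' := fun m m' => by
    show g.hom (PolyMod.single 0 (m + m') : PolyMod R M)
      = g.hom (PolyMod.single 0 m : PolyMod R M) + g.hom (PolyMod.single 0 m' : PolyMod R M)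
    exact (congrArg g.hom (PolyMod.single_add' 0 m m')).trans (map_add g.hom _ _)
  map_smul' := fun a m => by
    show g.hom (PolyMod.single 0 (a • m) : PolyMod R M)
      = (Polynomial.C a : R[X]) • g.hom (PolyMod.single 0 m : PolyMod R M)
    exact (congrArg g.hom (PolyMod.C_smul_single a 0 m).symm).trans (g.hom.map_smul _ _) } :
      M →ₗ[R] (ModuleCat.restrictScalars (Polynomial.C : R →+* R[X])).obj N)

def adjInvFun {M : ModuleCat.{u} R} {N : ModuleCat.{u} R[X]}
    (h : M ⟶ (ModuleCat.restrictScalars (Polynomial.C : R →+* R[X])).obj N) :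
    (polyFunctor R).obj M ⟶ N :=
  ModuleCat.ofHom (PolyMod.lift (h.hom.toAddMonoidHom) (fun a m => by
    show h.hom (a • m) = (Polynomial.C a : R[X]) • h.hom m
    rw [LinearMap.map_smul]
    rfl))

lemma adjInvFun_single {M : ModuleCat.{u} R} {N : ModuleCat.{u} R[X]}
    (h : M ⟶ (ModuleCat.restrictScalars (Polynomial.C : R →+* R[X])).obj N) (j : ℕ) (m : M) :
    (adjInvFun h).hom (PolyMod.single j m : PolyMod R M) = (Polynomial.X ^ j : R[X]) • h.hom m := by
  exact PolyMod.lift_single _ (fun a m => by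
    show h.hom (a • m) = (Polynomial.C a : R[X]) • h.hom m
    rw [LinearMap.map_smul]
    rfl) j m

variable (R) in
/-- The induction functor is left adjoint to restriction of scalars along `C : R →+* R[X]`. -/
def polyAdjunction : polyFunctor R ⊣ ModuleCat.restrictScalars (Polynomial.C : R →+* R[X]) :=
  Adjunction.mkOfHomEquiv
    { homEquiv := fun M N =>
        { toFun := adjToFun
          invFun := adjInvFun
          left_inv := fun g => ModuleCat.hom_ext (PolyMod.lhom_ext (fun j m => by
            show (adjInvFun (adjToFun g)).hom (PolyMod.single j m : PolyMod R M)
              = g.hom (PolyMod.single j m : PolyMod R M)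
            rw [adjInvFun_single]
            show (Polynomial.X ^ j : R[X]) • g.hom (PolyMod.single 0 m : PolyMod R M)
              = g.hom (PolyMod.single j m : PolyMod R M)
            refine (g.hom.map_smul _ _).symm.trans ?_
            refine congrArg g.hom ?_
            show (Polynomial.X ^ j : R[X]) • (PolyMod.single 0 m : PolyMod R M)
              = PolyMod.single j m
            rw [PolyMod.X_pow_smul_single, Nat.zero_add]))
          right_inv := fun h => ModuleCat.hom_ext (LinearMap.ext (fun m => by
            show (adjInvFun h).hom (PolyMod.single 0 m : PolyMod R M) = h.hom m
            rw [adjInvFun_single, pow_zero, one_smul])) }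
      homEquiv_naturality_left_symm := fun {M' M N} f g => ModuleCat.hom_ext
        (PolyMod.lhom_ext (fun j m => by
        show (adjInvFun (f ≫ g)).hom (PolyMod.single j m : PolyMod R M')
          = (adjInvFun g).hom (PolyMod.map f.hom (PolyMod.single j m : PolyMod R M'))
        rw [adjInvFun_single, PolyMod.map_single, adjInvFun_single]
        rfl))
      homEquiv_naturality_right := fun {M N N'} f g =>
        ModuleCat.hom_ext (LinearMap.ext (fun m => rfl)) }

end Functoriality
section Main
theorem isVogelRegular_polynomialAux {R : Type u} [Ring R] (hR : IsVogelRegular R) :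
    IsVogelRegular (Polynomial R) := by
  intro M S hS h0
  letI : PreservesColimits (polyFunctor R) := (polyAdjunction R).leftAdjoint_preservesColimits
  have hS' : IsExactClass R {M0 : ModuleCat.{u} R | (polyFunctor R).obj M0 ∈ S} := by
    constructor
    · intro J iJ fJ F c hc hmem
      exact hS.1 J iJ fJ (F ⋙ polyFunctor R) ((polyFunctor R).mapCocone c)
        (isColimitOfPreserves (polyFunctor R) hc) hmem
    · intro M1 N1 P1 f g hf hg hfg
      exact hS.2 ((polyFunctor R).obj M1) ((polyFunctor R).obj N1) ((polyFunctor R).obj P1)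
        (PolyMod.map f) (PolyMod.map g) (PolyMod.map_injective hf)
        (PolyMod.map_surjective hg) (PolyMod.map_exact hf hfg)
  have h0' : ModuleCat.of R R ∈ {M0 : ModuleCat.{u} R | (polyFunctor R).obj M0 ∈ S} :=
    mem_of_linearEquiv hS h0 (ModuleCat.of R[X] R[X]) ((polyFunctor R).obj (ModuleCat.of R R))
      (polyModSelf R).symm h0
  have hres := hR ((ModuleCat.restrictScalars (Polynomial.C : R →+* R[X])).obj M) _ hS' h0'
  letI modR : Module R M := Module.compHom M (Polynomial.C : R →+* R[X])
  have hcomp : ∀ (a : R) (x : M), a • x = (Polynomial.C a : R[X]) • x := fun a x => rfl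
  have h23 := hS.2 (ModuleCat.of R[X] (PolyMod R M)) (ModuleCat.of R[X] (PolyMod R M)) M
    (charAlpha hcomp) (charBeta hcomp) (charAlpha_injective hcomp)
    (charBeta_surjective hcomp) (charAlpha_exact hcomp)
  exact h23.1 hres hres

theorem isVogelRegular_of_ringEquiv {R S' : Type u} [Ring R] [Ring S'] (e : R ≃+* S')
    (hR : IsVogelRegular R) : IsVogelRegular S' := by
  intro M T hT h0
  let Eqv := ModuleCat.restrictScalarsEquivalenceOfRingEquiv e
  letI : PreservesColimits Eqv.inverse := inferInstance
  have hT' : IsExactClass R {M0 : ModuleCat.{u} R | Eqv.inverse.obj M0 ∈ T} := by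
    constructor
    · intro J iJ fJ F c hc hmem
      exact hT.1 J iJ fJ (F ⋙ Eqv.inverse) (Eqv.inverse.mapCocone c)
        (isColimitOfPreserves _ hc) hmem
    · intro M1 N1 P1 f g hf hg hfg
      exact hT.2 (Eqv.inverse.obj M1) (Eqv.inverse.obj N1) (Eqv.inverse.obj P1)
        (Eqv.inverse.map (ModuleCat.ofHom f)).hom (Eqv.inverse.map (ModuleCat.ofHom g)).hom
        hf hg hfg
  have h0' : ModuleCat.of R R ∈ {M0 : ModuleCat.{u} R | Eqv.inverse.obj M0 ∈ T} := by
    refine mem_of_linearEquiv hT h0 (ModuleCat.of S' S')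
      (Eqv.inverse.obj (ModuleCat.of R R)) ?_ h0
    exact
      { toFun := fun s => e.symm s
        invFun := fun r => e r
        left_inv := fun s => e.apply_symm_apply s
        right_inv := fun r => e.symm_apply_apply r
        map_add' := fun s t => map_add e.symm s t
        map_smul' := fun s t => map_mul e.symm s t }
  have hmem := hR (Eqv.functor.obj M) _ hT' h0'
  exact mem_of_iso hT h0 _ M (Eqv.unitIso.app M).symm hmem
end Main


end

/-- if `A` is a right regular ring (in the sense of Vogel), then the
polynomial ring `A[t]` is right regular too. -/
theorem isVogelRightRegular_polynomial
    (A : Type u) [Ring A] (hA : IsVogelRightRegular A) :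
    IsVogelRightRegular (Polynomial A) := by
  exact isVogelRegular_of_ringEquiv (Polynomial.opRingEquiv A).symm
    (isVogelRegular_polynomialAux hA)
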